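/- Let n ∈ ℕ, ζₙ a primitive n-th root of unity in ℂ, and m = 2ˢ·k with gcd(k, n) = 1. Then μ(n) ≡ Σ_{j ∈ (ℤ/nℤ)ˣ} ζₙ^{mj} (mod 2), i.e., the sum of the m-th powers of all primitive n-th roots of unity is an integer congruent modulo 2 to the Möbius function μ(n). -/

import Mathlib

open ArithmeticFunction

private lemma pow_mod_aux {M : Type*} [Monoid M] {z : M} {n : ℕ} (hz : z ^ n = 1) (c : ℕ) :
    z ^ c = z ^ (c % n) := by
  conv_lhs => rw [← Nat.div_add_mod c n]
  rw [pow_add, pow_mul, hz, one_pow, one_mul]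

private lemma exists_int_of_isIntegral {x : ℂ} (hx : IsIntegral ℤ x) {q : ℚ} (hq : (q : ℂ) = x) :
    ∃ c : ℤ, (c : ℚ) = q := by
  have h1 : IsIntegral ℤ q := by
    refine IsIntegral.tower_bot_of_field (B := ℂ) ?_
    rwa [show algebraMap ℚ ℂ q = (q : ℂ) from rfl, hq]
  exact IsIntegrallyClosed.isIntegral_iff.mp h1

/-- Ramanujan sum evaluation: the sum of `a`-th powers of the primitive `n`-th roots of
unity is the integer `∑_{d ∣ n, n ∣ ad} μ(d)·(n/d)`. -/
private lemma ramanujan_int (n : ℕ) [NeZero n] {z : ℂ} (hz : IsPrimitiveRoot z n) (a : ℕ) :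
    ∑ j : (ZMod n)ˣ, z ^ (a * ((j : ZMod n).val)) =
      ((∑ d ∈ n.divisors, if n ∣ a * d then moebius d * ((n / d : ℕ) : ℤ) else 0 : ℤ) : ℂ) := by
  have hn : n ≠ 0 := NeZero.ne n
  have h1 : ∑ j : (ZMod n)ˣ, z ^ (a * ((j : ZMod n).val))
      = ∑ i ∈ (Finset.range n).filter (fun i => Nat.gcd n i = 1), z ^ (a * i) := by
    refine Finset.sum_bij (fun j _ => ((j : ZMod n)).val) ?_ ?_ ?_ ?_
    · intro j _
      simp only [Finset.mem_filter, Finset.mem_range]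
      exact ⟨ZMod.val_lt _, (ZMod.val_coe_unit_coprime j).symm⟩
    · intro j _ j' _ h
      refine Units.ext ?_
      rw [← ZMod.natCast_rightInverse (j : ZMod n), ← ZMod.natCast_rightInverse (j' : ZMod n), h]
    · intro b hb
      simp only [Finset.mem_filter, Finset.mem_range] at hb
      refine ⟨ZMod.unitOfCoprime b (Nat.coprime_comm.mp hb.2), Finset.mem_univ _, ?_⟩
      rw [ZMod.coe_unitOfCoprime, ZMod.val_natCast, Nat.mod_eq_of_lt hb.1]
    · intro j _; rfl
  rw [h1, Finset.sum_filter]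
  have key : ∀ i, (if Nat.gcd n i = 1 then z ^ (a * i) else 0)
      = ∑ d ∈ n.divisors, if d ∣ i then (moebius d : ℂ) * z ^ (a * i) else 0 := by
    intro i
    have hg : Nat.gcd n i ≠ 0 := fun h => hn (Nat.eq_zero_of_gcd_eq_zero_left h)
    have hd : (Nat.gcd n i).divisors = n.divisors.filter (· ∣ i) := by
      ext d
      simp only [Nat.mem_divisors, Finset.mem_filter, Nat.dvd_gcd_iff]
      constructor
      · rintro ⟨⟨h1, h2⟩, -⟩; exact ⟨⟨h1, hn⟩, h2⟩
      · rintro ⟨⟨h1, -⟩, h2⟩; exact ⟨⟨h1, h2⟩, hg⟩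
    have h2 : (if Nat.gcd n i = 1 then (1 : ℤ) else 0)
        = ∑ d ∈ (Nat.gcd n i).divisors, moebius d := by
      rw [← coe_mul_zeta_apply, moebius_mul_coe_zeta, one_apply]
    calc (if Nat.gcd n i = 1 then z ^ (a * i) else 0)
        = ((if Nat.gcd n i = 1 then (1 : ℤ) else 0 : ℤ) : ℂ) * z ^ (a * i) := by
          split <;> simp
      _ = ((∑ d ∈ (Nat.gcd n i).divisors, moebius d : ℤ) : ℂ) * z ^ (a * i) := by rw [h2]
      _ = ∑ d ∈ (Nat.gcd n i).divisors, (moebius d : ℂ) * z ^ (a * i) := by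
          push_cast; rw [Finset.sum_mul]
      _ = ∑ d ∈ n.divisors.filter (· ∣ i), (moebius d : ℂ) * z ^ (a * i) := by rw [hd]
      _ = ∑ d ∈ n.divisors, if d ∣ i then (moebius d : ℂ) * z ^ (a * i) else 0 :=
          Finset.sum_filter _ _
  simp only [key]
  rw [Finset.sum_comm]
  have inner : ∀ d ∈ n.divisors,
      (∑ i ∈ Finset.range n, if d ∣ i then (moebius d : ℂ) * z ^ (a * i) else 0)
        = (moebius d : ℂ) * (if n ∣ a * d then ((n / d : ℕ) : ℂ) else 0) := by
    intro d hd
    obtain ⟨hdn, -⟩ := Nat.mem_divisors.mp hd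
    have hd0 : d ≠ 0 := fun h => hn (by simpa [h] using hdn)
    rw [← Finset.sum_filter, ← Finset.mul_sum]
    congr 1
    have hbij : (∑ i ∈ (Finset.range n).filter (d ∣ ·), z ^ (a * i))
        = ∑ t ∈ Finset.range (n / d), (z ^ (a * d)) ^ t := by
      refine Finset.sum_bij' (fun i _ => i / d) (fun t _ => d * t) ?_ ?_ ?_ ?_ ?_
      · intro i hi
        simp only [Finset.mem_filter, Finset.mem_range] at hi
        rw [Finset.mem_range, Nat.lt_div_iff_mul_lt' hdn, Nat.mul_div_cancel' hi.2]
        exact hi.1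
      · intro t ht
        rw [Finset.mem_range] at ht
        simp only [Finset.mem_filter, Finset.mem_range]
        exact ⟨(Nat.lt_div_iff_mul_lt' hdn t).mp ht, Dvd.intro t rfl⟩
      · intro i hi
        simp only [Finset.mem_filter] at hi
        exact Nat.mul_div_cancel' hi.2
      · intro t _
        exact Nat.mul_div_cancel_left t (Nat.pos_of_ne_zero hd0)
      · intro i hi
        simp only [Finset.mem_filter] at hi
        rw [← pow_mul, mul_assoc, Nat.mul_div_cancel' hi.2]
    rw [hbij]
    by_cases hzd : z ^ (a * d) = 1
    · rw [if_pos ((hz.pow_eq_one_iff_dvd _).mp hzd), Finset.sum_congr rfl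
        (fun t _ => by rw [hzd, one_pow])]
      simp
    · rw [if_neg (fun h => hzd ((hz.pow_eq_one_iff_dvd _).mpr h)), geom_sum_eq hzd]
      have : (z ^ (a * d)) ^ (n / d) = 1 := by
        rw [← pow_mul, mul_assoc, Nat.mul_div_cancel' hdn, mul_comm, pow_mul, hz.pow_eq_one,
          one_pow]
      rw [this, sub_self, zero_div]
  rw [Finset.sum_congr rfl inner, Int.cast_sum]
  refine Finset.sum_congr rfl fun d _ => ?_
  rw [apply_ite (fun x : ℤ => (x : ℂ))]
  split
  · rw [Int.cast_mul, Int.cast_natCast]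
  · simp

/-- The sum of the primitive `n`-th roots of unity is `μ(n)`. -/
private lemma sum_units_eq_moebius (n : ℕ) [NeZero n] {z : ℂ} (hz : IsPrimitiveRoot z n) :
    ∑ j : (ZMod n)ˣ, z ^ ((j : ZMod n).val) = ((moebius n : ℤ) : ℂ) := by
  have hn : n ≠ 0 := NeZero.ne n
  have h := ramanujan_int n hz 1
  simp only [one_mul] at h
  rw [h]
  congr 1
  rw [Finset.sum_eq_single_of_mem n (Nat.mem_divisors_self n hn)]
  · rw [if_pos dvd_rfl, Nat.div_self (Nat.pos_of_ne_zero hn)]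
    simp
  · intro d hd hne
    rw [if_neg]
    intro h'
    exact hne (Nat.dvd_antisymm (Nat.mem_divisors.mp hd).1 h')

private lemma integral_of_mem_adjoin {z : ℂ} (hz : IsIntegral ℤ z) {x : ℂ}
    (hx : x ∈ Algebra.adjoin ℤ ({z} : Set ℂ)) : IsIntegral ℤ x := by
  haveI : Algebra.IsIntegral ℤ (Algebra.adjoin ℤ ({z} : Set ℂ)) :=
    Algebra.IsIntegral.adjoin (by rintro y rfl; exact hz)
  have h := Algebra.IsIntegral.isIntegral (R := ℤ)
    (⟨x, hx⟩ : Algebra.adjoin ℤ ({z} : Set ℂ))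
  exact h.map (Subalgebra.val _)

/-- Freshman's dream modulo 2 for the sum of `2^s`-th powers of primitive roots. -/
private lemma sum_pow_two_pow (n : ℕ) [NeZero n] {z : ℂ} (hz : IsPrimitiveRoot z n) (s : ℕ) :
    ∃ γ : ℂ, IsIntegral ℤ γ ∧
      ∑ j : (ZMod n)ˣ, z ^ (2 ^ s * ((j : ZMod n).val)) =
        ((moebius n : ℤ) : ℂ) ^ (2 ^ s) + 2 * γ := by
  classical
  have hn : 0 < n := Nat.pos_of_ne_zero (NeZero.ne n)
  set f : Polynomial ℤ := ∑ j : (ZMod n)ˣ, Polynomial.X ^ ((j : ZMod n).val) with hf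
  set F : Polynomial ℤ := ∑ j : (ZMod n)ˣ, Polynomial.X ^ (2 ^ s * ((j : ZMod n).val)) with hF
  -- `f ^ 2^s ≡ F (mod 2)` in `ℤ[X]`, via the Frobenius in `(ℤ/2)[X]`
  have hdvd : (2 : Polynomial ℤ) ∣ f ^ (2 ^ s) - F := by
    have hmap : (f ^ (2 ^ s) - F).map (Int.castRingHom (ZMod 2)) = 0 := by
      haveI : ExpChar (Polynomial (ZMod 2)) 2 := ExpChar.prime Nat.prime_two
      rw [Polynomial.map_sub, Polynomial.map_pow, hf, hF, Polynomial.map_sum,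
        Polynomial.map_sum]
      simp only [Polynomial.map_pow, Polynomial.map_X]
      rw [sum_pow_char_pow]
      rw [Finset.sum_congr rfl (fun j _ => by rw [← pow_mul, mul_comm])]
      exact sub_self _
    have hcoeff : ∀ i, (2 : ℤ) ∣ (f ^ (2 ^ s) - F).coeff i := by
      intro i
      have h2 := congrArg (fun p => Polynomial.coeff p i) hmap
      simp only [Polynomial.coeff_map, Polynomial.coeff_zero] at h2
      exact (ZMod.intCast_zmod_eq_zero_iff_dvd _ 2).mp h2
    rw [show (2 : Polynomial ℤ) = Polynomial.C 2 by norm_num]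
    exact (Polynomial.C_dvd_iff_dvd_coeff 2 _).mpr hcoeff
  obtain ⟨g, hg⟩ := hdvd
  -- evaluate at `z`
  have heval := congrArg (Polynomial.aeval z) hg
  rw [map_sub, map_mul, map_pow] at heval
  have hef : Polynomial.aeval z f = ((moebius n : ℤ) : ℂ) := by
    rw [hf, map_sum]
    simp only [map_pow, Polynomial.aeval_X]
    exact sum_units_eq_moebius n hz
  have heF : Polynomial.aeval z F = ∑ j : (ZMod n)ˣ, z ^ (2 ^ s * ((j : ZMod n).val)) := by
    rw [hF, map_sum]
    simp only [map_pow, Polynomial.aeval_X]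
  refine ⟨-Polynomial.aeval z g, ?_, ?_⟩
  · refine IsIntegral.neg ?_
    refine integral_of_mem_adjoin (hz.isIntegral hn) ?_
    rw [Algebra.adjoin_singleton_eq_range_aeval]
    exact ⟨g, rfl⟩
  · have h2C : Polynomial.aeval z (2 : Polynomial ℤ) = (2 : ℂ) := by
      rw [show (2 : Polynomial ℤ) = Polynomial.C 2 by norm_num, Polynomial.aeval_C]
      norm_num
    rw [h2C, hef, heF] at heval
    linear_combination -heval

theorem sum_primitive_root_powers_mod_two (n : ℕ) [NeZero n] (z : ℂ)
    (hz : IsPrimitiveRoot z n) (s k m : ℕ) (hm : m = 2 ^ s * k)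
    (hk : Nat.gcd k n = 1) :
    ∃ c : ℤ, (∑ j : (ZMod n)ˣ, z ^ (m * ((j : ZMod n).val))) =
      ((moebius n : ℤ) : ℂ) + 2 * (c : ℂ) := by
  classical
  have hn : 0 < n := Nat.pos_of_ne_zero (NeZero.ne n)
  have hzn : z ^ n = 1 := hz.pow_eq_one
  set u : (ZMod n)ˣ := ZMod.unitOfCoprime k hk with hu
  -- rewrite the sum as a sum of `2^s`-th powers over a reindexed unit
  have hstep : ∀ j : (ZMod n)ˣ,
      z ^ (m * ((j : ZMod n).val)) = (z ^ (((u * j : (ZMod n)ˣ) : ZMod n).val)) ^ (2 ^ s) := by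
    intro j
    have hcast : ((u * j : (ZMod n)ˣ) : ZMod n) = ((k * ((j : ZMod n).val) : ℕ) : ZMod n) := by
      push_cast
      rw [hu, ZMod.coe_unitOfCoprime, ZMod.natCast_rightInverse (j : ZMod n)]
    have hval : (((u * j : (ZMod n)ˣ) : ZMod n)).val = (k * ((j : ZMod n).val)) % n := by
      rw [hcast, ZMod.val_natCast]
    rw [hval, ← pow_mod_aux hzn, ← pow_mul, hm]
    ring_nf
  rw [Finset.sum_congr rfl (fun j _ => hstep j)]
  rw [show (∑ j : (ZMod n)ˣ, (z ^ (((u * j : (ZMod n)ˣ) : ZMod n).val)) ^ (2 ^ s))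
      = ∑ j : (ZMod n)ˣ, (z ^ (((j : (ZMod n)ˣ) : ZMod n).val)) ^ (2 ^ s) from
    Fintype.sum_equiv (Equiv.mulLeft u) _ _ (fun j => rfl)]
  rw [Finset.sum_congr rfl (fun j (_ : j ∈ Finset.univ) => by
    rw [← pow_mul, mul_comm ((j : ZMod n)).val (2 ^ s)])]
  -- now use the mod-2 identity and integrality
  obtain ⟨γ, hγint, hγ⟩ := sum_pow_two_pow n hz s
  obtain ⟨b, hb⟩ : ∃ b : ℤ, ∑ j : (ZMod n)ˣ, z ^ (2 ^ s * ((j : ZMod n).val)) = (b : ℂ) :=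
    ⟨_, ramanujan_int n hz (2 ^ s)⟩
  -- γ is a rational number, hence an integer
  have hq : (((b - (moebius n : ℤ) ^ (2 ^ s) : ℤ) : ℚ) / 2 : ℚ) = (γ : ℂ) := by
    have : (b : ℂ) = ((moebius n : ℤ) : ℂ) ^ (2 ^ s) + 2 * γ := by rw [← hb, hγ]
    push_cast
    rw [this]
    ring
  obtain ⟨c0, hc0⟩ := exists_int_of_isIntegral hγint hq
  have hc0' : (c0 * 2 : ℤ) = b - (moebius n : ℤ) ^ (2 ^ s) := by
    have := hc0
    field_simp at this
    exact_mod_cast this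
  -- μ(n)^(2^s) ≡ μ(n) (mod 2)
  obtain ⟨e, he⟩ : ∃ e : ℤ, (moebius n : ℤ) ^ (2 ^ s) = (moebius n : ℤ) + 2 * e := by
    have hev : Even ((moebius n : ℤ) ^ (2 ^ s) - (moebius n : ℤ)) := by
      rcases Int.even_or_odd (moebius n : ℤ) with hpar | hpar
      · rw [Int.even_sub]
        constructor <;> intro
        · exact hpar
        · exact (Int.even_pow.mpr ⟨hpar, pow_ne_zero s two_ne_zero⟩)
      · rw [Int.even_sub']
        constructor <;> intro
        · exact hpar
        · exact hpar.pow
      -- fallback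
    obtain ⟨e, he⟩ := hev
    exact ⟨e, by linarith⟩
  refine ⟨e + c0, ?_⟩
  rw [hb]
  have : b = (moebius n : ℤ) + 2 * (e + c0) := by linarith [hc0', he]
  rw [this]
  push_cast
  ring
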